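/- Let ε₀, σ > 0, let ρ : [−ε₀, ε₀] → ℝ be continuously differentiable, and let v : [−ε₀, ε₀] × [−σ, σ] → ℝ be continuously differentiable with v(ε, 0) = 0 and (∂v/∂s)(ε, 0) = −2 for all ε. Define, for small r, A(r) = ∫_{−ε₀}^{ε₀} ∫_{−σ'}^{σ'} |r·ρ'(ε) + v(ε, s)| ds dε for a suitable σ' ∈ (0, σ] (chosen so that ∂v/∂s < 0 on [−ε₀,ε₀]×[−σ',σ']). Then A is twice differentiable at r = 0 and A''(0) = ∫_{−ε₀}^{ε₀} ρ'(ε)² dε. -/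

import Mathlib

open MeasureTheory Metric Set Filter intervalIntegral

lemma measurable_realSign : Measurable Real.sign := by
  have : Real.sign = fun r : ℝ => if r < 0 then (-1:ℝ) else if 0 < r then 1 else 0 := by
    funext r; rfl
  rw [this]
  exact Measurable.ite (measurableSet_lt measurable_id measurable_const) measurable_const
    (Measurable.ite (measurableSet_lt measurable_const measurable_id) measurable_const
      measurable_const)

lemma abs_realSign_le (x : ℝ) : |Real.sign x| ≤ 1 := by
  rcases Real.sign_apply_eq x with h | h | h <;> rw [h] <;> norm_num

lemma hasDerivAt_abs_shift (a c₀ : ℝ) (h : c₀ + a ≠ 0) :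
    HasDerivAt (fun c => |c + a|) (Real.sign (c₀ + a)) c₀ := by
  rcases h.lt_or_gt with hneg | hpos
  · rw [Real.sign_of_neg hneg]
    have hd : HasDerivAt (fun c : ℝ => -(c + a)) (-1) c₀ :=
      ((hasDerivAt_id c₀).add_const a).neg
    apply hd.congr_of_eventuallyEq
    have hc : ContinuousAt (fun c : ℝ => c + a) c₀ := by fun_prop
    have h2 : ∀ᶠ c in nhds c₀, c + a < 0 := hc.eventually_lt continuousAt_const hneg
    filter_upwards [h2] with c hcneg
    exact abs_of_neg hcneg
  · rw [Real.sign_of_pos hpos]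
    have hd : HasDerivAt (fun c : ℝ => c + a) 1 c₀ := (hasDerivAt_id c₀).add_const a
    apply hd.congr_of_eventuallyEq
    have hc : ContinuousAt (fun c : ℝ => c + a) c₀ := by fun_prop
    have h2 : ∀ᶠ c in nhds c₀, 0 < c + a := continuousAt_const.eventually_lt hc hpos
    filter_upwards [h2] with c hcpos
    exact abs_of_pos hcpos

theorem stmt_13 (ε₀ σ : ℝ) (hε₀ : 0 < ε₀) (hσ : 0 < σ)
    (ρ : ℝ → ℝ) (hρ : ContDiff ℝ 1 ρ)
    (v : ℝ → ℝ → ℝ) (hv : ContDiff ℝ 1 (Function.uncurry v))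
    (hv0 : ∀ ε : ℝ, v ε 0 = 0) (hvs : ∀ ε : ℝ, deriv (v ε) 0 = -2) :
    ∃ σ' ∈ Set.Ioc (0:ℝ) σ,
      (∀ ε ∈ Set.Icc (-ε₀) ε₀, ∀ s ∈ Set.Icc (-σ') σ', deriv (v ε) s < 0) ∧
      ∀ A : ℝ → ℝ,
        (∀ r : ℝ, A r = ∫ ε in (-ε₀)..ε₀, ∫ s in (-σ')..σ', |r * deriv ρ ε + v ε s|) →
        (∀ᶠ r in nhds (0:ℝ), DifferentiableAt ℝ A r) ∧
        DifferentiableAt ℝ (deriv A) 0 ∧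
        deriv (deriv A) 0 = ∫ ε in (-ε₀)..ε₀, (deriv ρ ε) ^ 2 := by
  have hvdiff : Differentiable ℝ (Function.uncurry v) := hv.differentiable one_ne_zero
  set D : ℝ × ℝ → ℝ := fun p => fderiv ℝ (Function.uncurry v) p (0, 1) with hDdef
  have hvd : ∀ ε s : ℝ, HasDerivAt (v ε) (D (ε, s)) s := by
    intro ε s
    have h1 : HasFDerivAt (Function.uncurry v) (fderiv ℝ (Function.uncurry v) (ε, s)) (ε, s) :=
      (hvdiff (ε, s)).hasFDerivAt
    have h2 : HasDerivAt (fun t : ℝ => (ε, t)) ((0 : ℝ), (1 : ℝ)) s :=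
      (hasDerivAt_const s ε).prodMk (hasDerivAt_id s)
    have := h1.comp_hasDerivAt s h2
    exact this
  have hDcont : Continuous D := (hv.continuous_fderiv one_ne_zero).clm_apply continuous_const
  have hD0 : ∀ ε : ℝ, D (ε, 0) = -2 := by
    intro ε
    rw [← (hvd ε 0).deriv, hvs ε]
  -- choice of σ'
  obtain ⟨δ, hδpos, hδ⟩ : ∃ δ > 0,
      Metric.thickening δ (Set.Icc (-ε₀) ε₀ ×ˢ ({0} : Set ℝ)) ⊆ D ⁻¹' (Set.Iio (-1)) := by
    apply IsCompact.exists_thickening_subset_open (isCompact_Icc.prod isCompact_singleton)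
      (isOpen_Iio.preimage hDcont)
    rintro ⟨ε, s⟩ ⟨hε, hs⟩
    simp only [Set.mem_singleton_iff] at hs
    subst hs
    simp only [Set.mem_preimage, Set.mem_Iio, hD0]
    norm_num
  set σ' := min σ (δ / 2) with hσ'def
  have hσ'pos : 0 < σ' := lt_min hσ (by linarith)
  have hσ'le : σ' ≤ σ := min_le_left _ _
  have hrect : ∀ ε ∈ Set.Icc (-ε₀) ε₀, ∀ s ∈ Set.Icc (-σ') σ', D (ε, s) < -1 := by
    intro ε hε s hs
    have hmem : (ε, s) ∈ Metric.thickening δ (Set.Icc (-ε₀) ε₀ ×ˢ ({0} : Set ℝ)) := by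
      rw [Metric.mem_thickening_iff]
      refine ⟨(ε, 0), ⟨hε, rfl⟩, ?_⟩
      rw [Prod.dist_eq]
      simp only [dist_self, Real.dist_eq, sub_zero]
      have h1 : |s| ≤ σ' := abs_le.2 ⟨hs.1, hs.2⟩
      have h2 : σ' ≤ δ / 2 := min_le_right _ _
      calc max 0 |s| ≤ max 0 σ' := max_le_max le_rfl h1
        _ ≤ δ / 2 := by rw [max_eq_right hσ'pos.le]; exact h2
        _ < δ := by linarith
    exact hδ hmem
  refine ⟨σ', ⟨hσ'pos, hσ'le⟩, ?_, ?_⟩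
  · intro ε hε s hs
    rw [(hvd ε s).deriv]
    linarith [hrect ε hε s hs]
  intro A hA
  have hvcont : ∀ ε : ℝ, Continuous (v ε) := fun ε =>
    hv.continuous.comp (continuous_const.prodMk continuous_id)
  -- quantitative monotonicity
  have hstar : ∀ ε ∈ Set.Icc (-ε₀) ε₀, ∀ s₁ ∈ Set.Icc (-σ') σ', ∀ s₂ ∈ Set.Icc (-σ') σ',
      s₁ ≤ s₂ → v ε s₂ + s₂ ≤ v ε s₁ + s₁ := by
    intro ε hε s₁ hs₁ s₂ hs₂ h12
    have hanti : AntitoneOn (fun s => v ε s + s) (Set.Icc (-σ') σ') := by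
      apply antitoneOn_of_deriv_nonpos (convex_Icc _ _)
      · exact ((hvcont ε).add continuous_id).continuousOn
      · intro x hx
        rw [interior_Icc] at hx
        have : HasDerivAt (fun s => v ε s + s) (D (ε, x) + 1) x := by
          exact (hvd ε x).add (hasDerivAt_id x)
        exact this.differentiableAt.differentiableWithinAt
      · intro x hx
        rw [interior_Icc] at hx
        have hder : HasDerivAt (fun s => v ε s + s) (D (ε, x) + 1) x := by
          exact (hvd ε x).add (hasDerivAt_id x)
        rw [hder.deriv]
        have := hrect ε hε x ⟨hx.1.le, hx.2.le⟩
        linarith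
    exact hanti hs₁ hs₂ h12
  have huniq : ∀ ε ∈ Set.Icc (-ε₀) ε₀, ∀ s₁ ∈ Set.Icc (-σ') σ', ∀ s₂ ∈ Set.Icc (-σ') σ',
      v ε s₁ = v ε s₂ → s₁ = s₂ := by
    intro ε hε s₁ hs₁ s₂ hs₂ heq
    rcases le_total s₁ s₂ with h | h
    · have := hstar ε hε s₁ hs₁ s₂ hs₂ h; linarith
    · have := hstar ε hε s₂ hs₂ s₁ hs₁ h; linarith
  have hlipv : ∀ ε ∈ Set.Icc (-ε₀) ε₀, ∀ s₁ ∈ Set.Icc (-σ') σ', ∀ s₂ ∈ Set.Icc (-σ') σ',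
      |s₁ - s₂| ≤ |v ε s₁ - v ε s₂| := by
    intro ε hε s₁ hs₁ s₂ hs₂
    rcases le_total s₁ s₂ with h | h
    · have := hstar ε hε s₁ hs₁ s₂ hs₂ h
      rw [abs_sub_comm s₁ s₂, abs_of_nonneg (by linarith : (0:ℝ) ≤ s₂ - s₁),
        abs_of_nonneg (by linarith : (0:ℝ) ≤ v ε s₁ - v ε s₂)]
      linarith
    · have := hstar ε hε s₂ hs₂ s₁ hs₁ h
      rw [abs_of_nonneg (by linarith : (0:ℝ) ≤ s₁ - s₂),
        abs_sub_comm (v ε s₁), abs_of_nonneg (by linarith : (0:ℝ) ≤ v ε s₂ - v ε s₁)]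
      linarith
  -- the root function
  have hex : ∀ ε c : ℝ, ∃ s : ℝ,
      ε ∈ Set.Icc (-ε₀) ε₀ → |c| < σ' → s ∈ Set.Ioo (-σ') σ' ∧ v ε s = -c := by
    intro ε c
    by_cases hc : ε ∈ Set.Icc (-ε₀) ε₀ ∧ |c| < σ'
    · obtain ⟨hε, hcσ⟩ := hc
      have h0mem : (0:ℝ) ∈ Set.Icc (-σ') σ' := ⟨by linarith, hσ'pos.le⟩
      have hmem1 : (-σ' : ℝ) ∈ Set.Icc (-σ') σ' := ⟨le_refl _, by linarith⟩
      have hmem2 : (σ' : ℝ) ∈ Set.Icc (-σ') σ' := ⟨by linarith, le_refl _⟩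
      have h1 : v ε σ' ≤ -σ' := by
        have := hstar ε hε 0 h0mem σ' hmem2 hσ'pos.le
        rw [hv0 ε] at this; linarith
      have h2 : σ' ≤ v ε (-σ') := by
        have := hstar ε hε (-σ') hmem1 0 h0mem (by linarith)
        rw [hv0 ε] at this; linarith
      have habs := abs_lt.1 hcσ
      have hmemIoo : -c ∈ Set.Ioo (v ε σ') (v ε (-σ')) :=
        ⟨by linarith, by linarith⟩
      obtain ⟨s, hsmem, hvs'⟩ := intermediate_value_Ioo' (by linarith : -σ' ≤ σ')
        ((hvcont ε).continuousOn) hmemIoo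
      exact ⟨s, fun _ _ => ⟨hsmem, hvs'⟩⟩
    · exact ⟨0, fun h1 h2 => absurd ⟨h1, h2⟩ hc⟩
  choose S hS using hex
  have hSmem : ∀ ε ∈ Set.Icc (-ε₀) ε₀, ∀ c : ℝ, |c| < σ' → S ε c ∈ Set.Ioo (-σ') σ' :=
    fun ε hε c hc => (hS ε c hε hc).1
  have hSv : ∀ ε ∈ Set.Icc (-ε₀) ε₀, ∀ c : ℝ, |c| < σ' → v ε (S ε c) = -c :=
    fun ε hε c hc => (hS ε c hε hc).2
  have hS0 : ∀ ε ∈ Set.Icc (-ε₀) ε₀, S ε 0 = 0 := by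
    intro ε hε
    have h1 : |(0:ℝ)| < σ' := by simpa using hσ'pos
    apply huniq ε hε (S ε 0) (Set.Ioo_subset_Icc_self (hSmem ε hε 0 h1)) 0
      ⟨by linarith, hσ'pos.le⟩
    rw [hSv ε hε 0 h1, hv0 ε, neg_zero]
  have hSlip : ∀ ε ∈ Set.Icc (-ε₀) ε₀, ∀ c₁ c₂ : ℝ, |c₁| < σ' → |c₂| < σ' →
      |S ε c₁ - S ε c₂| ≤ |c₁ - c₂| := by
    intro ε hε c₁ c₂ h1 h2
    have := hlipv ε hε (S ε c₁) (Set.Ioo_subset_Icc_self (hSmem ε hε c₁ h1))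
      (S ε c₂) (Set.Ioo_subset_Icc_self (hSmem ε hε c₂ h2))
    rw [hSv ε hε c₁ h1, hSv ε hε c₂ h2] at this
    calc |S ε c₁ - S ε c₂| ≤ |-c₁ - -c₂| := this
      _ = |c₁ - c₂| := by rw [abs_sub_comm]; ring_nf
  -- the function g
  set g : ℝ → ℝ → ℝ := fun ε c => ∫ s in (-σ')..σ', Real.sign (c + v ε s) with hgdef
  have hsignint : ∀ (ε c a b : ℝ),
      IntervalIntegrable (fun s => Real.sign (c + v ε s)) volume a b := by
    intro ε c a b
    apply IntervalIntegrable.mono_fun' (g := fun _ => (1:ℝ)) intervalIntegrable_const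
    · exact ((measurable_realSign.comp
        ((continuous_const.add (hvcont ε)).measurable))).aestronglyMeasurable
    · exact Eventually.of_forall fun s => abs_realSign_le _
  have hg2S : ∀ ε ∈ Set.Icc (-ε₀) ε₀, ∀ c : ℝ, |c| < σ' → g ε c = 2 * S ε c := by
    intro ε hε c hc
    have hs₀ := hSmem ε hε c hc
    have hvS := hSv ε hε c hc
    have hane : ∀ᵐ s : ℝ, s ≠ S ε c := by
      rw [MeasureTheory.ae_iff]
      have hset : {s : ℝ | ¬ s ≠ S ε c} = {S ε c} := by ext s; simp
      rw [hset]
      exact measure_singleton _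
    have key : ∀ s ∈ Set.Icc (-σ') σ', s ≠ S ε c →
        (s < S ε c → Real.sign (c + v ε s) = 1) ∧ (S ε c < s → Real.sign (c + v ε s) = -1) := by
      intro s hsmem hne
      constructor
      · intro hlt
        apply Real.sign_of_pos
        have := hstar ε hε s hsmem (S ε c) (Set.Ioo_subset_Icc_self hs₀) hlt.le
        rw [hvS] at this; linarith
      · intro hlt
        apply Real.sign_of_neg
        have := hstar ε hε (S ε c) (Set.Ioo_subset_Icc_self hs₀) s hsmem hlt.le
        rw [hvS] at this; linarith
    have h1 : (∫ s in (-σ')..(S ε c), Real.sign (c + v ε s)) = S ε c - (-σ') := by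
      rw [show S ε c - (-σ') = ∫ s in (-σ')..(S ε c), (1:ℝ) by simp]
      apply intervalIntegral.integral_congr_ae
      filter_upwards [hane] with s hne hmem
      rw [Set.uIoc_of_le hs₀.1.le] at hmem
      have hsmem : s ∈ Set.Icc (-σ') σ' := ⟨hmem.1.le, hmem.2.trans hs₀.2.le⟩
      exact (key s hsmem hne).1 (lt_of_le_of_ne hmem.2 hne)
    have h2 : (∫ s in (S ε c)..σ', Real.sign (c + v ε s)) = -(σ' - S ε c) := by
      rw [show -(σ' - S ε c) = ∫ s in (S ε c)..σ', (-1:ℝ) by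
        rw [intervalIntegral.integral_const]; simp]
      apply intervalIntegral.integral_congr_ae
      filter_upwards [hane] with s hne hmem
      rw [Set.uIoc_of_le hs₀.2.le] at hmem
      have hsmem : s ∈ Set.Icc (-σ') σ' := ⟨hs₀.1.le.trans hmem.1.le, hmem.2⟩
      exact (key s hsmem hne).2 hmem.1
    have hadd := intervalIntegral.integral_add_adjacent_intervals
      (hsignint ε c (-σ') (S ε c)) (hsignint ε c (S ε c) σ')
    have : g ε c = (∫ s in (-σ')..(S ε c), Real.sign (c + v ε s))
        + ∫ s in (S ε c)..σ', Real.sign (c + v ε s) := by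
      rw [hgdef]; exact hadd.symm
    rw [this, h1, h2]; ring
  -- derivative of the inner integral
  have hhd : ∀ ε ∈ Set.Icc (-ε₀) ε₀, ∀ c₀ : ℝ,
      HasDerivAt (fun c => ∫ s in (-σ')..σ', |c + v ε s|) (g ε c₀) c₀ := by
    intro ε hε c₀
    have hae : ∀ᵐ s : ℝ, s ∈ Set.uIoc (-σ') σ' → c₀ + v ε s ≠ 0 := by
      have hsub : {s : ℝ | s ∈ Set.uIoc (-σ') σ' ∧ c₀ + v ε s = 0}.Subsingleton := by
        intro x hx y hy
        apply huniq ε hε x _ y _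
        · have := hx.2; have := hy.2; linarith
        · rw [Set.uIoc_of_le (by linarith : -σ' ≤ σ')] at hx
          exact ⟨hx.1.1.le, hx.1.2⟩
        · rw [Set.uIoc_of_le (by linarith : -σ' ≤ σ')] at hy
          exact ⟨hy.1.1.le, hy.1.2⟩
      rw [MeasureTheory.ae_iff]
      apply measure_mono_null _ (hsub.countable.measure_zero volume)
      intro s hs
      simp only [Set.mem_setOf_eq, not_forall] at hs ⊢
      tauto
    have key := intervalIntegral.hasDerivAt_integral_of_dominated_loc_of_lip
      (F := fun c s => |c + v ε s|) (F' := fun s => Real.sign (c₀ + v ε s))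
      (bound := fun _ => (1:ℝ)) (a := -σ') (b := σ') (μ := volume) (x₀ := c₀)
      (Metric.ball_mem_nhds _ zero_lt_one)
      (Eventually.of_forall fun c =>
        ((continuous_const.add (hvcont ε)).abs).aestronglyMeasurable)
      (((continuous_const.add (hvcont ε)).abs).intervalIntegrable _ _)
      ((measurable_realSign.comp
        ((continuous_const.add (hvcont ε)).measurable)).aestronglyMeasurable)
      (Eventually.of_forall fun s _ => ?_)
      intervalIntegrable_const
      ?_
    · exact key.2
    · -- Lipschitz
      have h1 : LipschitzWith 1 (fun c : ℝ => |c + v ε s|) := by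
        apply LipschitzWith.of_dist_le_mul
        intro x y
        rw [Real.dist_eq, Real.dist_eq, NNReal.coe_one, one_mul]
        calc |(|x + v ε s|) - (|y + v ε s|)| ≤ |(x + v ε s) - (y + v ε s)| :=
              abs_abs_sub_abs_le_abs_sub _ _
          _ = |x - y| := by ring_nf
      have hc : Real.nnabs (1:ℝ) = 1 := NNReal.coe_injective (by simp)
      rw [hc]
      exact h1.lipschitzOnWith
    · -- differentiability a.e.
      filter_upwards [hae] with s hs hmem
      exact hasDerivAt_abs_shift (v ε s) c₀ (hs hmem)
  have hρ' : Continuous (deriv ρ) := hρ.continuous_deriv le_rfl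
  -- measurability of g-composites
  have hgmeas : ∀ q : ℝ → ℝ, Continuous q → Measurable (fun ε => g ε (q ε)) := by
    intro q hq
    have hf : StronglyMeasurable fun p : (ℝ × ℝ) × ℝ => Real.sign (p.1.2 + v p.1.1 p.2) := by
      apply Measurable.stronglyMeasurable
      apply measurable_realSign.comp
      have : Continuous fun p : (ℝ × ℝ) × ℝ => p.1.2 + v p.1.1 p.2 := by
        apply Continuous.add
        · fun_prop
        · exact hv.continuous.comp ((continuous_fst.comp continuous_fst).prodMk continuous_snd)
      exact this.measurable
    have hΦ : StronglyMeasurable fun p : ℝ × ℝ =>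
        ∫ s, Real.sign (p.2 + v p.1 s) ∂(volume.restrict (Set.Ioc (-σ') σ')) :=
      hf.integral_prod_right'
    have heq : (fun ε => g ε (q ε)) = (fun p : ℝ × ℝ =>
        ∫ s, Real.sign (p.2 + v p.1 s) ∂(volume.restrict (Set.Ioc (-σ') σ')))
          ∘ (fun ε => (ε, q ε)) := by
      funext ε
      simp only [Function.comp_apply, hgdef]
      rw [intervalIntegral.integral_of_le (by linarith : -σ' ≤ σ')]
    rw [heq]
    exact hΦ.measurable.comp (continuous_id.prodMk hq).measurable
  -- Step 1 : A is differentiable everywhere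
  have hstep1 : ∀ r₀ : ℝ,
      HasDerivAt A (∫ ε in (-ε₀)..ε₀, deriv ρ ε * g ε (r₀ * deriv ρ ε)) r₀ := by
    intro r₀
    have hcont2 : ∀ r : ℝ, Continuous fun ε => ∫ s in (-σ')..σ', |r * deriv ρ ε + v ε s| := by
      intro r
      apply intervalIntegral.continuous_parametric_intervalIntegral_of_continuous'
      have : Continuous (Function.uncurry fun (ε : ℝ) (s : ℝ) => |r * deriv ρ ε + v ε s|) := by
        apply Continuous.abs
        apply Continuous.add
        · exact (continuous_const.mul hρ').comp continuous_fst
        · exact hv.continuous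
      exact this
    have main := intervalIntegral.hasDerivAt_integral_of_dominated_loc_of_lip
      (F := fun r ε => ∫ s in (-σ')..σ', |r * deriv ρ ε + v ε s|)
      (F' := fun ε => deriv ρ ε * g ε (r₀ * deriv ρ ε))
      (bound := fun ε => 2 * σ' * |deriv ρ ε|) (a := -ε₀) (b := ε₀) (μ := volume)
      (x₀ := r₀) (Metric.ball_mem_nhds _ zero_lt_one)
      (Eventually.of_forall fun r => (hcont2 r).aestronglyMeasurable)
      ((hcont2 r₀).intervalIntegrable _ _)
      ((hρ'.measurable.mul (hgmeas (fun ε => r₀ * deriv ρ ε)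
        (continuous_const.mul hρ'))).aestronglyMeasurable)
      (Eventually.of_forall fun ε _ => ?_)
      ((continuous_const.mul hρ'.abs).intervalIntegrable _ _)
      (Eventually.of_forall fun ε hmem => ?_)
    · have hAeq : A = fun r => ∫ ε in (-ε₀)..ε₀, ∫ s in (-σ')..σ', |r * deriv ρ ε + v ε s| :=
        funext hA
      rw [hAeq]
      exact main.2
    · -- Lipschitz in r
      rw [lipschitzOnWith_iff_dist_le_mul]
      intro r1 _ r2 _
      rw [Real.dist_eq, Real.dist_eq]
      have hint1 : IntervalIntegrable (fun s => |r1 * deriv ρ ε + v ε s|) volume (-σ') σ' :=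
        ((continuous_const.add (hvcont ε)).abs).intervalIntegrable _ _
      have hint2 : IntervalIntegrable (fun s => |r2 * deriv ρ ε + v ε s|) volume (-σ') σ' :=
        ((continuous_const.add (hvcont ε)).abs).intervalIntegrable _ _
      have hsub : (∫ s in (-σ')..σ', |r1 * deriv ρ ε + v ε s|)
          - ∫ s in (-σ')..σ', |r2 * deriv ρ ε + v ε s|
          = ∫ s in (-σ')..σ', (|r1 * deriv ρ ε + v ε s| - |r2 * deriv ρ ε + v ε s|) :=
        (intervalIntegral.integral_sub hint1 hint2).symm
      rw [hsub]
      have hbd : ∀ s ∈ Set.uIoc (-σ') σ',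
          ‖|r1 * deriv ρ ε + v ε s| - |r2 * deriv ρ ε + v ε s|‖ ≤ |deriv ρ ε| * |r1 - r2| := by
        intro s _
        rw [Real.norm_eq_abs]
        calc |(|r1 * deriv ρ ε + v ε s|) - (|r2 * deriv ρ ε + v ε s|)|
            ≤ |(r1 * deriv ρ ε + v ε s) - (r2 * deriv ρ ε + v ε s)| :=
              abs_abs_sub_abs_le_abs_sub _ _
          _ = |(r1 - r2) * deriv ρ ε| := by ring_nf
          _ = |deriv ρ ε| * |r1 - r2| := by rw [abs_mul]; ring
      have := intervalIntegral.norm_integral_le_of_norm_le_const hbd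
      rw [Real.norm_eq_abs] at this
      calc |∫ s in (-σ')..σ', (|r1 * deriv ρ ε + v ε s| - |r2 * deriv ρ ε + v ε s|)|
          ≤ |deriv ρ ε| * |r1 - r2| * |σ' - (-σ')| := this
        _ = (Real.nnabs (2 * σ' * |deriv ρ ε|) : ℝ) * |r1 - r2| := by
            rw [Real.coe_nnabs]
            rw [abs_of_nonneg (by positivity : (0:ℝ) ≤ 2 * σ' * |deriv ρ ε|),
              abs_of_nonneg (by linarith : (0:ℝ) ≤ σ' - (-σ'))]
            ring
    · -- differentiability in r
      have hε : ε ∈ Set.Icc (-ε₀) ε₀ := by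
        rw [Set.uIoc_of_le (by linarith : -ε₀ ≤ ε₀)] at hmem
        exact ⟨hmem.1.le, hmem.2⟩
      have hlin : HasDerivAt (fun r : ℝ => r * deriv ρ ε) (deriv ρ ε) r₀ :=
        hasDerivAt_mul_const _
      have := (hhd ε hε (r₀ * deriv ρ ε)).comp r₀ hlin
      rw [mul_comm (g ε (r₀ * deriv ρ ε)) (deriv ρ ε)] at this; exact this
  have hdiffA : ∀ r : ℝ, DifferentiableAt ℝ A r := fun r => (hstep1 r).differentiableAt
  have hderivA : deriv A = fun r => ∫ ε in (-ε₀)..ε₀, deriv ρ ε * g ε (r * deriv ρ ε) :=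
    funext fun r => (hstep1 r).deriv
  -- bound on deriv ρ
  obtain ⟨C, hC⟩ := (isCompact_Icc (a := -ε₀) (b := ε₀)).exists_bound_of_continuousOn
    hρ'.continuousOn
  set M : ℝ := max C 1 with hMdef
  have hM1 : (1:ℝ) ≤ M := le_max_right _ _
  have hMpos : (0:ℝ) < M := by linarith
  have hM : ∀ ε ∈ Set.Icc (-ε₀) ε₀, |deriv ρ ε| ≤ M := by
    intro ε hε
    calc |deriv ρ ε| = ‖deriv ρ ε‖ := rfl
      _ ≤ C := hC ε hε
      _ ≤ M := le_max_left _ _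
  set δ₂ : ℝ := σ' / M with hδ₂def
  have hδ₂pos : 0 < δ₂ := div_pos hσ'pos hMpos
  have hδ₂M : δ₂ * M = σ' := div_mul_cancel₀ _ (ne_of_gt hMpos)
  -- derivative of S at 0
  have hSd : ∀ ε ∈ Set.Icc (-ε₀) ε₀, HasDerivAt (S ε) (2⁻¹ : ℝ) 0 := by
    intro ε hε
    have hf : HasDerivAt (fun s => -(v ε s)) 2 (S ε 0) := by
      rw [hS0 ε hε]
      have := (hvd ε 0).neg
      rw [hD0 ε] at this
      rw [neg_neg] at this; exact this
    have hgc : ContinuousAt (S ε) 0 := by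
      have hlip : LipschitzOnWith 1 (S ε) (ball (0:ℝ) σ') := by
        rw [lipschitzOnWith_iff_dist_le_mul]
        intro x hx y hy
        rw [Real.dist_eq, Real.dist_eq, NNReal.coe_one, one_mul]
        exact hSlip ε hε x y (by simpa [Real.dist_eq] using hx) (by simpa [Real.dist_eq] using hy)
      exact hlip.continuousOn.continuousAt (Metric.ball_mem_nhds 0 hσ'pos)
    have hfg : ∀ᶠ c in nhds (0:ℝ), -(v ε (S ε c)) = c := by
      filter_upwards [Metric.ball_mem_nhds (0:ℝ) hσ'pos] with c hc
      rw [hSv ε hε c (by simpa [Real.dist_eq] using hc)]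
      ring
    have := HasDerivAt.of_local_left_inverse hgc hf two_ne_zero hfg
    simpa using this
  -- Step 2
  have hstep2 : HasDerivAt (fun r => ∫ ε in (-ε₀)..ε₀, deriv ρ ε * g ε (r * deriv ρ ε))
      (∫ ε in (-ε₀)..ε₀, (deriv ρ ε) ^ 2) 0 := by
    have hmemIcc : ∀ ε ∈ Set.uIoc (-ε₀) ε₀, ε ∈ Set.Icc (-ε₀) ε₀ := by
      intro ε hmem
      rw [Set.uIoc_of_le (by linarith : -ε₀ ≤ ε₀)] at hmem
      exact ⟨hmem.1.le, hmem.2⟩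
    have hsmall : ∀ ε ∈ Set.Icc (-ε₀) ε₀, ∀ r : ℝ, |r| < δ₂ → |r * deriv ρ ε| < σ' := by
      intro ε hε r hr
      calc |r * deriv ρ ε| = |r| * |deriv ρ ε| := abs_mul _ _
        _ ≤ |r| * M := by
            apply mul_le_mul_of_nonneg_left (hM ε hε) (abs_nonneg r)
        _ < δ₂ * M := by
            apply mul_lt_mul_of_pos_right hr hMpos
        _ = σ' := hδ₂M
    have main := intervalIntegral.hasDerivAt_integral_of_dominated_loc_of_lip
      (F := fun r ε => deriv ρ ε * g ε (r * deriv ρ ε))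
      (F' := fun ε => (deriv ρ ε) ^ 2)
      (bound := fun _ => 2 * M ^ 2) (a := -ε₀) (b := ε₀) (μ := volume)
      (x₀ := 0) (Metric.ball_mem_nhds _ hδ₂pos)
      (Eventually.of_forall fun r => (hρ'.measurable.mul (hgmeas (fun ε => r * deriv ρ ε)
        (continuous_const.mul hρ'))).aestronglyMeasurable)
      ?_
      ((hρ'.pow 2).aestronglyMeasurable)
      (Eventually.of_forall fun ε hmem => ?_)
      intervalIntegrable_const
      (Eventually.of_forall fun ε hmem => ?_)
    · exact main.2
    · -- integrability at 0
      have hzero : ∀ᵐ ε ∂(volume.restrict (Set.uIoc (-ε₀) ε₀)),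
          deriv ρ ε * g ε ((0:ℝ) * deriv ρ ε) = 0 := by
        rw [MeasureTheory.ae_restrict_iff' measurableSet_uIoc]
        apply Eventually.of_forall
        intro ε hmem
        have hε := hmemIcc ε hmem
        rw [zero_mul, hg2S ε hε 0 (by simpa using hσ'pos), hS0 ε hε]
        ring
      rw [intervalIntegrable_iff]
      exact (integrable_zero _ _ _).congr (by filter_upwards [hzero] with ε h using h.symm)
    · -- Lipschitz
      have hε := hmemIcc ε hmem
      rw [lipschitzOnWith_iff_dist_le_mul]
      intro r1 h1 r2 h2
      rw [Real.dist_eq, Real.dist_eq]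
      have hr1 : |r1| < δ₂ := by simpa [Real.dist_eq] using h1
      have hr2 : |r2| < δ₂ := by simpa [Real.dist_eq] using h2
      have hc1 := hsmall ε hε r1 hr1
      have hc2 := hsmall ε hε r2 hr2
      rw [hg2S ε hε _ hc1, hg2S ε hε _ hc2]
      have hSl := hSlip ε hε _ _ hc1 hc2
      have hcoe : ((Real.nnabs (2 * M ^ 2)) : ℝ) = 2 * M ^ 2 := by
        rw [Real.coe_nnabs, abs_of_nonneg (by positivity)]
      rw [hcoe]
      calc |deriv ρ ε * (2 * S ε (r1 * deriv ρ ε)) - deriv ρ ε * (2 * S ε (r2 * deriv ρ ε))|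
          = 2 * |deriv ρ ε| * |S ε (r1 * deriv ρ ε) - S ε (r2 * deriv ρ ε)| := by
            rw [show deriv ρ ε * (2 * S ε (r1 * deriv ρ ε))
                - deriv ρ ε * (2 * S ε (r2 * deriv ρ ε))
                = 2 * deriv ρ ε * (S ε (r1 * deriv ρ ε) - S ε (r2 * deriv ρ ε)) by ring,
              abs_mul, abs_mul]
            simp [abs_of_nonneg, mul_assoc]
        _ ≤ 2 * |deriv ρ ε| * |r1 * deriv ρ ε - r2 * deriv ρ ε| := by
            apply mul_le_mul_of_nonneg_left hSl (by positivity)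
        _ = 2 * |deriv ρ ε| * (|deriv ρ ε| * |r1 - r2|) := by
            rw [show r1 * deriv ρ ε - r2 * deriv ρ ε = (r1 - r2) * deriv ρ ε by ring,
              abs_mul]
            ring
        _ ≤ 2 * M ^ 2 * |r1 - r2| := by
            have h := hM ε hε
            have h0 : (0:ℝ) ≤ |deriv ρ ε| := abs_nonneg _
            have k1 : |deriv ρ ε| * |deriv ρ ε| ≤ M * M := mul_le_mul h h h0 hMpos.le
            have k2 : |deriv ρ ε| * |deriv ρ ε| * |r1 - r2| ≤ M * M * |r1 - r2| :=
              mul_le_mul_of_nonneg_right k1 (abs_nonneg _)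
            nlinarith [k2]
    · -- HasDerivAt at 0
      have hε := hmemIcc ε hmem
      have hlin : HasDerivAt (fun r : ℝ => r * deriv ρ ε) (deriv ρ ε) 0 :=
        hasDerivAt_mul_const _
      have hS0' : HasDerivAt (S ε) (2⁻¹ : ℝ) ((fun r : ℝ => r * deriv ρ ε) 0) := by
        simpa using hSd ε hε
      have h1 : HasDerivAt (fun r => S ε (r * deriv ρ ε)) (2⁻¹ * deriv ρ ε) 0 :=
        hS0'.comp 0 hlin
      have h2 : HasDerivAt (fun r => deriv ρ ε * (2 * S ε (r * deriv ρ ε)))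
          (deriv ρ ε * (2 * (2⁻¹ * deriv ρ ε))) 0 := (h1.const_mul 2).const_mul (deriv ρ ε)
      have heq : (fun r => deriv ρ ε * g ε (r * deriv ρ ε))
          =ᶠ[nhds (0:ℝ)] fun r => deriv ρ ε * (2 * S ε (r * deriv ρ ε)) := by
        filter_upwards [Metric.ball_mem_nhds (0:ℝ) hδ₂pos] with r hr
        rw [hg2S ε hε _ (hsmall ε hε r (by simpa [Real.dist_eq] using hr))]
      have := h2.congr_of_eventuallyEq heq
      convert this using 1
      ring
  -- conclusion
  have hd2 : HasDerivAt (deriv A) (∫ ε in (-ε₀)..ε₀, (deriv ρ ε) ^ 2) 0 := by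
    rw [hderivA]; exact hstep2
  exact ⟨Eventually.of_forall hdiffA, hd2.differentiableAt, hd2.deriv⟩
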